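/- arXiv:1601.01190 — 2 statements merged into one kernel-verified Lean document; each statement's English description precedes it below -/
import Mathlib

section
/- (Lemma on the number of 'bad' rounds for a suboptimal arm, deterministic part) Let f, g, h be functions with f(T) → ∞, g(s) → 0, h(s)/s → 0 as s,T → ∞, with g and s ↦ h(s)/s non-increasing for large s. Let μ_a < μ₁ and d⁺(x,y) = d(x,y)·1{x<y}. Then for all ε > 0 there exists N(ε) such that for T ≥ N(ε), ∑_{s=1}^T P(s·d⁺(μ̂_{a,s}, μ₁ - g(s)) ≤ f(T) + h(s)) ≤ (1+ε)f(T)/d(μ_a,μ₁) + O(√f(T)) + O(1), where μ̂_{a,s} is the empirical mean of s i.i.d. samples from ν^{μ_a} and the O-terms depend only on ε, the divergence d, and the variance bound V_a = sup_{μ∈[μ_a,μ₁]} V(μ). -/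
open MeasureTheory Filter

set_option maxHeartbeats 2000000 in
open scoped Classical in
/-- Lemma on the number of 'bad' rounds for a suboptimal arm: if
`f(T) → ∞`, `g(s) → 0`, `h(s)/s → 0` (with `g` and `h(s)/s` eventually
non-increasing), then for every `ε > 0` and all `T` large enough,
`∑_{s=1}^T P(s d⁺(μ̂_{a,s}, μ₁ - g(s)) ≤ f(T) + h(s))
  ≤ (1+ε) f(T)/d(μ_a, μ₁) + C₁ √(f T) + C₂`. -/
theorem bad_rounds_lemma
    {Ω : Type*} [MeasurableSpace Ω] (P : Measure Ω) [IsProbabilityMeasure P]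
    (Θ J : Set ℝ) (hΘ : IsOpen Θ) (hΘconv : Convex ℝ Θ)
    (b b' b'' binv : ℝ → ℝ)
    (hb' : ∀ θ ∈ Θ, HasDerivAt b (b' θ) θ)
    (hb'' : ∀ θ ∈ Θ, HasDerivAt b' (b'' θ) θ)
    (hpos : ∀ θ ∈ Θ, 0 < b'' θ)
    (hJ : J = b' '' Θ)
    (hbinv : ∀ x ∈ J, binv x ∈ Θ ∧ b' (binv x) = x)
    (d : ℝ → ℝ → ℝ)
    (hd : ∀ x y, d x y = b' (binv x) * (binv x - binv y) - b (binv x) + b (binv y))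
    (μ₀m μa μ1 : ℝ) (hμ₀m : μ₀m ∈ J) (hμa : μa ∈ J) (hμ1 : μ1 ∈ J)
    (h0a : μ₀m < μa) (ha1 : μa < μ1)
    -- `Y i` are the successive i.i.d. rewards from arm `a`, with mean `μa`, for
    -- which the Chernoff bounds hold:
    (Y : ℕ → Ω → ℝ)
    (hChernoffUp : ∀ s : ℕ, 1 ≤ s → ∀ x, μa < x → x ∈ J →
      (P {ω | x ≤ (∑ i ∈ Finset.range s, Y i ω) / s}).toReal
        ≤ Real.exp (-(s : ℝ) * d x μa))
    (hChernoffLow : ∀ s : ℕ, 1 ≤ s → ∀ x, x < μa → x ∈ J →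
      (P {ω | (∑ i ∈ Finset.range s, Y i ω) / s ≤ x}).toReal
        ≤ Real.exp (-(s : ℝ) * d x μa))
    (f g h : ℕ → ℝ)
    (hf : Tendsto f atTop atTop)
    (hg : Tendsto g atTop (nhds 0))
    (hh : Tendsto (fun s : ℕ => h s / s) atTop (nhds 0))
    (hgmono : ∃ s₀ : ℕ, AntitoneOn g (Set.Ici s₀))
    (hhmono : ∃ s₀ : ℕ, AntitoneOn (fun s : ℕ => h s / s) (Set.Ici s₀)) :
    ∀ ε > 0, ∃ (N : ℕ) (C₁ C₂ : ℝ), ∀ T : ℕ, N ≤ T →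
      (∑ s ∈ Finset.Icc 1 T,
        (P {ω | (s : ℝ) *
            (if (∑ i ∈ Finset.range s, Y i ω) / s < μ1 - g s
             then d ((∑ i ∈ Finset.range s, Y i ω) / s) (μ1 - g s) else 0)
          ≤ f T + h s}).toReal)
      ≤ (1 + ε) * f T / d μa μ1 + C₁ * Real.sqrt (f T) + C₂ := by
  -- Basic regularity facts.
  have hb'cont : ContinuousOn b' Θ := fun θ hθ => (hb'' θ hθ).continuousAt.continuousWithinAt
  have hbcont : ContinuousOn b Θ := fun θ hθ => (hb' θ hθ).continuousAt.continuousWithinAt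
  have hb'mono : StrictMonoOn b' Θ := by
    refine strictMonoOn_of_deriv_pos hΘconv hb'cont ?_
    intro x hx
    rw [hΘ.interior_eq] at hx
    rw [(hb'' x hx).deriv]
    exact hpos x hx
  have hJconn : Set.OrdConnected J := by
    rw [hJ]
    exact (hΘconv.isPreconnected.image b' hb'cont).ordConnected
  have hmemJ : ∀ u ∈ J, ∀ v ∈ J, ∀ x : ℝ, u ≤ x → x ≤ v → x ∈ J :=
    fun u hu v hv x h1 h2 => hJconn.out hu hv ⟨h1, h2⟩
  have hbinvΘ : ∀ x ∈ J, binv x ∈ Θ := fun x hx => (hbinv x hx).1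
  have hb'binv : ∀ x ∈ J, b' (binv x) = x := fun x hx => (hbinv x hx).2
  have hbinvmono : ∀ x ∈ J, ∀ y ∈ J, x ≤ y → binv x ≤ binv y := by
    intro x hx y hy hxy
    by_contra hc
    push_neg at hc
    have := hb'mono (hbinvΘ y hy) (hbinvΘ x hx) hc
    rw [hb'binv x hx, hb'binv y hy] at this
    linarith
  -- Strict tangent-line inequality for the strictly convex `b`.
  have htan : ∀ θ₁ ∈ Θ, ∀ θ₂ ∈ Θ, θ₁ ≠ θ₂ → b θ₁ + b' θ₁ * (θ₂ - θ₁) < b θ₂ := by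
    intro θ₁ h1 θ₂ h2 hne
    rcases lt_or_gt_of_ne hne with hlt | hgt
    · have hsub : Set.Icc θ₁ θ₂ ⊆ Θ := hΘconv.ordConnected.out h1 h2
      obtain ⟨c, hc, hceq⟩ := exists_hasDerivAt_eq_slope b b' hlt (hbcont.mono hsub)
        (fun x hx => hb' x (hsub ⟨hx.1.le, hx.2.le⟩))
      have hcΘ : c ∈ Θ := hsub ⟨hc.1.le, hc.2.le⟩
      have hlt' : b' θ₁ < b' c := hb'mono h1 hcΘ hc.1
      have hne' : θ₂ - θ₁ ≠ 0 := by intro hz; exact hne (by linarith [sub_eq_zero.mp hz])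
      have heq := (div_eq_iff hne').mp hceq.symm
      have hmul : b' θ₁ * (θ₂ - θ₁) < b' c * (θ₂ - θ₁) :=
        mul_lt_mul_of_pos_right hlt' (by linarith)
      linarith
    · have hsub : Set.Icc θ₂ θ₁ ⊆ Θ := hΘconv.ordConnected.out h2 h1
      obtain ⟨c, hc, hceq⟩ := exists_hasDerivAt_eq_slope b b' hgt (hbcont.mono hsub)
        (fun x hx => hb' x (hsub ⟨hx.1.le, hx.2.le⟩))
      have hcΘ : c ∈ Θ := hsub ⟨hc.1.le, hc.2.le⟩
      have hlt' : b' c < b' θ₁ := hb'mono hcΘ h1 hc.2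
      have hne' : θ₁ - θ₂ ≠ 0 := by intro hz; exact hne (by linarith [sub_eq_zero.mp hz])
      have heq := (div_eq_iff hne').mp hceq.symm
      have hmul : b' c * (θ₁ - θ₂) < b' θ₁ * (θ₁ - θ₂) :=
        mul_lt_mul_of_pos_right hlt' (by linarith)
      nlinarith [hmul, heq]
  have htan' : ∀ θ₁ ∈ Θ, ∀ θ₂ ∈ Θ, b θ₁ + b' θ₁ * (θ₂ - θ₁) ≤ b θ₂ := by
    intro θ₁ h1 θ₂ h2
    rcases eq_or_ne θ₁ θ₂ with rfl | hne
    · simp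
    · exact (htan θ₁ h1 θ₂ h2 hne).le
  -- `d` in convenient form.
  have hdxy : ∀ x ∈ J, ∀ y : ℝ, d x y = b (binv y) - b (binv x) - x * (binv y - binv x) := by
    intro x hx y
    rw [hd, hb'binv x hx]; ring
  -- Positivity of `d`.
  have hdpos : ∀ x ∈ J, ∀ y ∈ J, x ≠ y → 0 < d x y := by
    intro x hx y hy hne
    have hθne : binv x ≠ binv y := by
      intro hEq
      exact hne (by rw [← hb'binv x hx, ← hb'binv y hy, hEq])
    have := htan (binv x) (hbinvΘ x hx) (binv y) (hbinvΘ y hy) hθne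
    rw [hb'binv x hx] at this
    rw [hdxy x hx y]; linarith
  -- Monotonicity of `d` in the first argument (decreasing below the second).
  have hdmono_x : ∀ x ∈ J, ∀ x' ∈ J, ∀ y ∈ J, x ≤ x' → x' ≤ y → d x' y ≤ d x y := by
    intro x hx x' hx' y hy hxx hxy
    have t1 := htan' (binv x) (hbinvΘ x hx) (binv x') (hbinvΘ x' hx')
    rw [hb'binv x hx] at t1
    have t2 : 0 ≤ (x' - x) * (binv y - binv x') :=
      mul_nonneg (by linarith) (by linarith [hbinvmono x' hx' y hy hxy])
    rw [hdxy x hx y, hdxy x' hx' y]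
    nlinarith [t1, t2]
  -- Monotonicity of `d` in the second argument (increasing above the first).
  have hdmono_y : ∀ x ∈ J, ∀ y ∈ J, ∀ y' ∈ J, x ≤ y → y ≤ y' → d x y ≤ d x y' := by
    intro x hx y hy y' hy' hxy hyy
    have t1 := htan' (binv y) (hbinvΘ y hy) (binv y') (hbinvΘ y' hy')
    rw [hb'binv y hy] at t1
    have t2 : 0 ≤ (y - x) * (binv y' - binv y) :=
      mul_nonneg (by linarith) (by linarith [hbinvmono y hy y' hy' hyy])
    rw [hdxy x hx y, hdxy x hx y']
    nlinarith [t1, t2]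
  -- Continuity-type upper bounds.
  have hdub_y : ∀ x ∈ J, ∀ y ∈ J, ∀ y' ∈ J, d x y' - d x y ≤ (y' - x) * (binv y' - binv y) := by
    intro x hx y hy y' hy'
    have t1 := htan' (binv y') (hbinvΘ y' hy') (binv y) (hbinvΘ y hy)
    rw [hb'binv y' hy'] at t1
    rw [hdxy x hx y, hdxy x hx y']
    nlinarith [t1]
  have hdub_x : ∀ x ∈ J, ∀ x' ∈ J, ∀ y : ℝ, d x y - d x' y ≤
      (x' - x) * (binv y - binv x) := by
    intro x hx x' hx' y
    have t1 := htan' (binv x') (hbinvΘ x' hx') (binv x) (hbinvΘ x hx)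
    rw [hb'binv x' hx'] at t1
    rw [hdxy x hx y, hdxy x' hx' y]
    nlinarith [t1]
  -- A small margin above `μ1` inside `J`.
  obtain ⟨t0, ht0, hball⟩ := Metric.isOpen_iff.mp hΘ (binv μ1) (hbinvΘ μ1 hμ1)
  have hθp : binv μ1 + t0 / 2 ∈ Θ := by
    apply hball
    rw [Metric.mem_ball, Real.dist_eq]
    rw [abs_of_nonneg (by linarith)]
    linarith
  have hxpJ : b' (binv μ1 + t0 / 2) ∈ J := hJ ▸ Set.mem_image_of_mem b' hθp
  have hxpgt : μ1 < b' (binv μ1 + t0 / 2) := by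
    have := hb'mono (hbinvΘ μ1 hμ1) hθp (by linarith)
    rwa [hb'binv μ1 hμ1] at this
  set δ₀ : ℝ := b' (binv μ1 + t0 / 2) - μ1 with hδ₀def
  have hδ₀pos : 0 < δ₀ := by simp only [hδ₀def]; linarith
  have hμ1δ₀J : μ1 + δ₀ ∈ J := by
    have : μ1 + δ₀ = b' (binv μ1 + t0 / 2) := by simp [hδ₀def]
    rw [this]; exact hxpJ
  set d1 : ℝ := d μa μ1 with hd1def
  have hd1 : 0 < d1 := hdpos μa hμa μ1 hμ1 (ne_of_lt ha1)
  intro ε hε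
  set ε'' : ℝ := d1 * ε / (1 + ε) / 2 with hε''def
  have hε''pos : 0 < ε'' := by
    rw [hε''def]
    positivity
  -- Choose `δ` so that `d (μa+δ) (μ1-δ)` is within `ε''` of `d1`.
  have hθa1 : binv μa < binv μ1 := by
    rcases (hbinvmono μa hμa μ1 hμ1 ha1.le).lt_or_eq with h' | h'
    · exact h'
    · exfalso
      have : μa = μ1 := by rw [← hb'binv μa hμa, ← hb'binv μ1 hμ1, h']
      linarith
  set t : ℝ := ε'' / (2 * (μ1 - μa)) with htdef
  have htpos : 0 < t := by
    rw [htdef]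
    exact div_pos hε''pos (by linarith)
  set tt : ℝ := min t ((binv μ1 - binv μa) / 2) with httdef
  have httpos : 0 < tt := lt_min htpos (by linarith)
  set thst : ℝ := binv μ1 - tt with hθsdef
  have hθsΘ : thst ∈ Θ := by
    apply hΘconv.ordConnected.out (hbinvΘ μa hμa) (hbinvΘ μ1 hμ1)
    constructor
    · have : tt ≤ (binv μ1 - binv μa) / 2 := min_le_right _ _
      rw [hθsdef]; linarith
    · rw [hθsdef]; linarith
  set xst : ℝ := b' thst with hxsdef
  have hxsJ : xst ∈ J := hJ ▸ Set.mem_image_of_mem b' hθsΘ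
  have hxslt : xst < μ1 := by
    have := hb'mono hθsΘ (hbinvΘ μ1 hμ1) (by rw [hθsdef]; linarith)
    rwa [hb'binv μ1 hμ1] at this
  have hxsgt : μa < xst := by
    have := hb'mono (hbinvΘ μa hμa) hθsΘ (by
      rw [hθsdef]
      have : tt ≤ (binv μ1 - binv μa) / 2 := min_le_right _ _
      linarith)
    rwa [hb'binv μa hμa] at this
  have hbinvxs : binv xst = thst := by
    apply hb'mono.injOn (hbinvΘ xst hxsJ) hθsΘ
    rw [hb'binv xst hxsJ]
  set Cθ : ℝ := binv μ1 - binv μa with hCθdef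
  have hCθpos : 0 < Cθ := by rw [hCθdef]; linarith
  set δ : ℝ := min (μ1 - xst) (min ((μ1 - μa) / 2) (ε'' / (2 * Cθ))) with hδdef
  have hδpos : 0 < δ := by
    apply lt_min (by linarith)
    apply lt_min (by linarith)
    positivity
  have hδle1 : δ ≤ μ1 - xst := min_le_left _ _
  have hδle2 : δ ≤ (μ1 - μa) / 2 := le_trans (min_le_right _ _) (min_le_left _ _)
  have hδle3 : δ ≤ ε'' / (2 * Cθ) := le_trans (min_le_right _ _) (min_le_right _ _)
  have hμaδJ : μa + δ ∈ J := hmemJ μa hμa μ1 hμ1 _ (by linarith) (by linarith)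
  have hμ1δJ : μ1 - δ ∈ J := hmemJ μa hμa μ1 hμ1 _ (by linarith) (by linarith)
  set d2 : ℝ := d (μa + δ) (μ1 - δ) with hd2def
  clear_value δ₀ d1 ε'' t tt thst xst Cθ δ d2
  -- `d2` is close to `d1`.
  have hd2 : d1 - ε'' ≤ d2 := by
    have e1 : d μa μ1 - d μa (μ1 - δ) ≤ (μ1 - μa) * (binv μ1 - binv (μ1 - δ)) :=
      hdub_y μa hμa (μ1 - δ) hμ1δJ μ1 hμ1
    have e2 : d μa (μ1 - δ) - d (μa + δ) (μ1 - δ) ≤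
        (μa + δ - μa) * (binv (μ1 - δ) - binv μa) := hdub_x μa hμa (μa + δ) hμaδJ (μ1 - δ)
    have e3 : binv μ1 - binv (μ1 - δ) ≤ t := by
      have hxs_le : xst ≤ μ1 - δ := by linarith
      have := hbinvmono xst hxsJ (μ1 - δ) hμ1δJ hxs_le
      rw [hbinvxs, hθsdef] at this
      have htt : tt ≤ t := by rw [httdef]; exact min_le_left _ _
      linarith
    have e4 : binv (μ1 - δ) - binv μa ≤ Cθ := by
      have := hbinvmono (μ1 - δ) hμ1δJ μ1 hμ1 (by linarith)
      rw [hCθdef]; linarith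
    have e5 : 0 ≤ binv μ1 - binv (μ1 - δ) := by
      have := hbinvmono (μ1 - δ) hμ1δJ μ1 hμ1 (by linarith); linarith
    have e6 : 0 ≤ binv (μ1 - δ) - binv μa := by
      have := hbinvmono μa hμa (μ1 - δ) hμ1δJ (by linarith); linarith
    have b1 : (μ1 - μa) * (binv μ1 - binv (μ1 - δ)) ≤ (μ1 - μa) * t :=
      mul_le_mul_of_nonneg_left e3 (by linarith)
    have b2 : (μa + δ - μa) * (binv (μ1 - δ) - binv μa) ≤ δ * Cθ := by
      have hrw : μa + δ - μa = δ := by ring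
      rw [hrw]
      exact mul_le_mul_of_nonneg_left e4 hδpos.le
    have hμane : μ1 - μa ≠ 0 := by linarith
    have hCθne : Cθ ≠ 0 := ne_of_gt hCθpos
    have b3 : (μ1 - μa) * t = ε'' / 2 := by
      rw [htdef]
      field_simp
    have b4 : δ * Cθ ≤ ε'' / 2 := by
      have := mul_le_mul_of_nonneg_right hδle3 hCθpos.le
      have hrw : ε'' / (2 * Cθ) * Cθ = ε'' / 2 := by
        field_simp
      linarith [hrw ▸ this]
    rw [hd1def, hd2def]
    linarith [e1, e2, b1, b2, b3, b4]
  have hd2η : d1 / (1 + ε) ≤ d2 - ε'' := by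
    have : d1 - 2 * ε'' = d1 / (1 + ε) := by
      rw [hε''def]
      field_simp
      ring
    linarith
  have hd2ηpos : 0 < d2 - ε'' := lt_of_lt_of_le (div_pos hd1 (by linarith)) hd2η
  -- Eventual smallness of `g` and `h s / s`.
  obtain ⟨s₁, hs₁⟩ := Metric.tendsto_atTop.mp hg (min δ δ₀) (lt_min hδpos hδ₀pos)
  obtain ⟨s₂, hs₂⟩ := Metric.tendsto_atTop.mp hh ε'' hε''pos
  set s₀ : ℕ := max s₁ s₂ with hs₀def
  -- Geometric tail constants.
  set q₁ : ℝ := Real.exp (-d μ₀m μa) with hq₁def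
  set q₂ : ℝ := Real.exp (-d (μa + δ) μa) with hq₂def
  have hq₁0 : 0 ≤ q₁ := (Real.exp_pos _).le
  have hq₂0 : 0 ≤ q₂ := (Real.exp_pos _).le
  have hq₁1 : q₁ < 1 := by
    rw [hq₁def, Real.exp_lt_one_iff]
    have := hdpos μ₀m hμ₀m μa hμa (ne_of_lt h0a)
    linarith
  have hq₂1 : q₂ < 1 := by
    rw [hq₂def, Real.exp_lt_one_iff]
    have := hdpos (μa + δ) hμaδJ μa hμa (by intro hEq; linarith)
    linarith
  obtain ⟨N, hN⟩ := eventually_atTop.mp (hf.eventually_ge_atTop 0)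
  refine ⟨N, 0, (s₀ : ℝ) + ((1 - q₁)⁻¹ + (1 - q₂)⁻¹), ?_⟩
  intro T hT
  have hfT : 0 ≤ f T := hN T hT
  set M : ℕ := max s₀ ⌊f T / (d2 - ε'')⌋₊ with hMdef
  -- The per-term bound.
  have key : ∀ s ∈ Finset.Icc 1 T,
      (P {ω | (s : ℝ) *
            (if (∑ i ∈ Finset.range s, Y i ω) / s < μ1 - g s
             then d ((∑ i ∈ Finset.range s, Y i ω) / s) (μ1 - g s) else 0)
          ≤ f T + h s}).toReal ≤ if s ≤ M then 1 else q₁ ^ s + q₂ ^ s := by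
    intro s hs
    rw [Finset.mem_Icc] at hs
    split_ifs with hsM
    · have := ENNReal.toReal_mono ENNReal.one_ne_top (prob_le_one (μ := P)
        (s := {ω | (s : ℝ) *
            (if (∑ i ∈ Finset.range s, Y i ω) / s < μ1 - g s
             then d ((∑ i ∈ Finset.range s, Y i ω) / s) (μ1 - g s) else 0)
          ≤ f T + h s}))
      simpa using this
    · push_neg at hsM
      have hs1 : 1 ≤ s := hs.1
      have hscast : (1 : ℝ) ≤ (s : ℝ) := by exact_mod_cast hs1
      have hspos : (0 : ℝ) < (s : ℝ) := by linarith
      have hss₁ : s₁ ≤ s := le_trans (le_trans (le_max_left _ _) (le_max_left _ _)) hsM.le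
      have hss₂ : s₂ ≤ s := le_trans (le_trans (le_max_right _ _) (le_max_left _ _)) hsM.le
      have hgs : |g s| < min δ δ₀ := by
        have := hs₁ s hss₁
        rwa [Real.dist_eq, sub_zero] at this
      have hgs1 : g s < δ := lt_of_lt_of_le (lt_of_abs_lt hgs) (min_le_left _ _)
      have hgs2 : -δ₀ < g s := by
        have := neg_lt_of_abs_lt hgs
        have h2 : min δ δ₀ ≤ δ₀ := min_le_right _ _
        linarith
      have hhs : h s ≤ ε'' * s := by
        have := hs₂ s hss₂
        rw [Real.dist_eq, sub_zero] at this
        have h2 : h s / s ≤ ε'' := (lt_of_abs_lt this).le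
        calc h s = h s / s * s := by field_simp
          _ ≤ ε'' * s := mul_le_mul_of_nonneg_right h2 hspos.le
      have hflt : f T < (s : ℝ) * (d2 - ε'') := by
        have h1 : ⌊f T / (d2 - ε'')⌋₊ < s := lt_of_le_of_lt (le_max_right _ _) hsM
        have h2 : f T / (d2 - ε'') < s := by
          calc f T / (d2 - ε'') < ⌊f T / (d2 - ε'')⌋₊ + 1 := Nat.lt_floor_add_one _
            _ ≤ (s : ℝ) := by exact_mod_cast h1
        exact (div_lt_iff₀ hd2ηpos).mp h2
      -- The event forces the empirical mean to be extreme.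
      have hsubset : {ω | (s : ℝ) *
            (if (∑ i ∈ Finset.range s, Y i ω) / s < μ1 - g s
             then d ((∑ i ∈ Finset.range s, Y i ω) / s) (μ1 - g s) else 0)
          ≤ f T + h s} ⊆
          {ω | (∑ i ∈ Finset.range s, Y i ω) / s ≤ μ₀m} ∪
          {ω | μa + δ ≤ (∑ i ∈ Finset.range s, Y i ω) / s} := by
        intro ω hω
        by_contra hc
        simp only [Set.mem_union, Set.mem_setOf_eq] at hc
        push_neg at hc
        obtain ⟨hc1, hc2⟩ := hc
        simp only [Set.mem_setOf_eq] at hω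
        set m : ℝ := (∑ i ∈ Finset.range s, Y i ω) / s with hmdef
        have hmlt : m < μ1 - g s := by linarith
        rw [if_pos hmlt] at hω
        have hmJ : m ∈ J := hmemJ μ₀m hμ₀m μ1 hμ1 m hc1.le (by linarith)
        have hyJ : μ1 - g s ∈ J :=
          hmemJ μa hμa (μ1 + δ₀) hμ1δ₀J _ (by linarith) (by linarith)
        have h1 : d (μa + δ) (μ1 - g s) ≤ d m (μ1 - g s) :=
          hdmono_x m hmJ (μa + δ) hμaδJ (μ1 - g s) hyJ hc2.le (by linarith)
        have h2 : d2 ≤ d (μa + δ) (μ1 - g s) := by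
          rw [hd2def]
          exact hdmono_y (μa + δ) hμaδJ (μ1 - δ) hμ1δJ (μ1 - g s) hyJ
            (by linarith) (by linarith)
        have hsd : (s : ℝ) * d2 ≤ (s : ℝ) * d m (μ1 - g s) :=
          mul_le_mul_of_nonneg_left (le_trans h2 h1) hspos.le
        linarith [hflt, hhs, hω, hsd]
      calc (P {ω | (s : ℝ) *
            (if (∑ i ∈ Finset.range s, Y i ω) / s < μ1 - g s
             then d ((∑ i ∈ Finset.range s, Y i ω) / s) (μ1 - g s) else 0)
          ≤ f T + h s}).toReal
          ≤ (P ({ω | (∑ i ∈ Finset.range s, Y i ω) / s ≤ μ₀m} ∪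
              {ω | μa + δ ≤ (∑ i ∈ Finset.range s, Y i ω) / s})).toReal :=
            ENNReal.toReal_mono (measure_ne_top P _) (measure_mono hsubset)
        _ ≤ (P {ω | (∑ i ∈ Finset.range s, Y i ω) / s ≤ μ₀m} +
              P {ω | μa + δ ≤ (∑ i ∈ Finset.range s, Y i ω) / s}).toReal := by
            apply ENNReal.toReal_mono
            · exact ENNReal.add_ne_top.mpr ⟨measure_ne_top P _, measure_ne_top P _⟩
            · exact measure_union_le _ _
        _ = (P {ω | (∑ i ∈ Finset.range s, Y i ω) / s ≤ μ₀m}).toReal +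
              (P {ω | μa + δ ≤ (∑ i ∈ Finset.range s, Y i ω) / s}).toReal :=
            ENNReal.toReal_add (measure_ne_top P _) (measure_ne_top P _)
        _ ≤ Real.exp (-(s : ℝ) * d μ₀m μa) + Real.exp (-(s : ℝ) * d (μa + δ) μa) :=
            add_le_add (hChernoffLow s hs1 μ₀m h0a hμ₀m)
              (hChernoffUp s hs1 (μa + δ) (by linarith) hμaδJ)
        _ = q₁ ^ s + q₂ ^ s := by
            rw [hq₁def, hq₂def, ← Real.exp_nat_mul, ← Real.exp_nat_mul]
            ring_nf
  -- Geometric sums.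
  have hgeom : ∀ q : ℝ, 0 ≤ q → q < 1 → ∑ s ∈ Finset.Icc 1 T, q ^ s ≤ (1 - q)⁻¹ := by
    intro q hq0 hq1
    have h1 : ∑ s ∈ Finset.Icc 1 T, q ^ s ≤ ∑ s ∈ Finset.range (T + 1), q ^ s := by
      apply Finset.sum_le_sum_of_subset_of_nonneg
      · intro i hi
        rw [Finset.mem_Icc] at hi
        rw [Finset.mem_range]
        omega
      · intro i _ _
        exact pow_nonneg hq0 i
    have h2 : ∑ s ∈ Finset.range (T + 1), q ^ s ≤ (1 - q)⁻¹ := by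
      rw [geom_sum_eq hq1.ne]
      rw [div_le_iff_of_neg (by linarith : q - 1 < 0)]
      have hne : (1 : ℝ) - q ≠ 0 := by linarith
      have hrw : (1 - q)⁻¹ * (q - 1) = -1 := by
        field_simp
        ring
      rw [hrw]
      have := pow_nonneg hq0 (T + 1)
      linarith
    linarith
  have hcard : (((Finset.Icc 1 T).filter (fun s => s ≤ M)).card : ℝ) ≤ (M : ℝ) := by
    have hsub : (Finset.Icc 1 T).filter (fun s => s ≤ M) ⊆ Finset.Icc 1 M := by
      intro i hi
      rw [Finset.mem_filter, Finset.mem_Icc] at hi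
      rw [Finset.mem_Icc]
      omega
    have := Finset.card_le_card hsub
    have hcardIcc : (Finset.Icc 1 M).card = M := by
      rw [Nat.card_Icc]
      omega
    exact_mod_cast hcardIcc ▸ this
  have hMle : (M : ℝ) ≤ (s₀ : ℝ) + f T / (d2 - ε'') := by
    have h1 : M ≤ s₀ + ⌊f T / (d2 - ε'')⌋₊ := max_le (Nat.le_add_right _ _) (Nat.le_add_left _ _)
    have h2 : (⌊f T / (d2 - ε'')⌋₊ : ℝ) ≤ f T / (d2 - ε'') :=
      Nat.floor_le (div_nonneg hfT hd2ηpos.le)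
    have h3 : (M : ℝ) ≤ (s₀ : ℝ) + (⌊f T / (d2 - ε'')⌋₊ : ℝ) := by exact_mod_cast h1
    linarith
  have hdiv : f T / (d2 - ε'') ≤ (1 + ε) * f T / d1 := by
    calc f T / (d2 - ε'') ≤ f T / (d1 / (1 + ε)) :=
          div_le_div_of_nonneg_left hfT (div_pos hd1 (by linarith)) hd2η
      _ = (1 + ε) * f T / d1 := by
          field_simp
  calc (∑ s ∈ Finset.Icc 1 T,
        (P {ω | (s : ℝ) *
            (if (∑ i ∈ Finset.range s, Y i ω) / s < μ1 - g s
             then d ((∑ i ∈ Finset.range s, Y i ω) / s) (μ1 - g s) else 0)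
          ≤ f T + h s}).toReal)
      ≤ ∑ s ∈ Finset.Icc 1 T, (if s ≤ M then 1 else q₁ ^ s + q₂ ^ s) :=
        Finset.sum_le_sum key
    _ ≤ ∑ s ∈ Finset.Icc 1 T,
        ((if s ≤ M then (1 : ℝ) else 0) + (q₁ ^ s + q₂ ^ s)) := by
        apply Finset.sum_le_sum
        intro i _
        split_ifs
        · have := pow_nonneg hq₁0 i
          have := pow_nonneg hq₂0 i
          linarith
        · simp
    _ = (((Finset.Icc 1 T).filter (fun s => s ≤ M)).card : ℝ) +
        ((∑ s ∈ Finset.Icc 1 T, q₁ ^ s) + ∑ s ∈ Finset.Icc 1 T, q₂ ^ s) := by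
        rw [Finset.sum_add_distrib, Finset.sum_add_distrib, Finset.sum_boole]
    _ ≤ (M : ℝ) + ((1 - q₁)⁻¹ + (1 - q₂)⁻¹) := by
        have := hgeom q₁ hq₁0 hq₁1
        have := hgeom q₂ hq₂0 hq₂1
        linarith
    _ ≤ (1 + ε) * f T / d1 + 0 * Real.sqrt (f T) +
        ((s₀ : ℝ) + ((1 - q₁)⁻¹ + (1 - q₂)⁻¹)) := by
        linarith
end

section
/- (Local comparison lemma for the Bayes risk lower bound) Let b be the log-partition function of an exponential family, h a positive continuous density on Θ, B = [b⁻, b⁺] a compact subset of Θ, γ ∈ (0,1), and ζ ∈ (0,1) such that (1+ζ)² = (1-γ/2)/(1-γ). Then there exists u₀ > 0 such that for all θ ∈ B and all 0 < u ≤ u₀: (ḃ(θ) - ḃ(θ-u))·h(θ-u) / K(θ-u, θ+ζu) ≥ (1-γ)·2h(θ)/u. -/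
set_option maxHeartbeats 400000


/-- Local comparison lemma for the Bayes risk lower bound: with
`K(θ,λ) = ḃ(θ)(θ-λ) - b(θ) + b(λ)` and `(1+ζ)² = (1-γ/2)/(1-γ)`, there exists
`u₀ > 0` such that for all `θ ∈ B = [b⁻, b⁺]` and all `0 < u ≤ u₀`,
`(ḃ(θ) - ḃ(θ-u)) h(θ-u) / K(θ-u, θ+ζu) ≥ (1-γ) 2 h(θ)/u`. -/
theorem bayes_risk_local_comparison
    (Θ : Set ℝ) (hΘ : IsOpen Θ) (hΘconv : Convex ℝ Θ)
    (b b' b'' : ℝ → ℝ)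
    (hb' : ∀ θ ∈ Θ, HasDerivAt b (b' θ) θ)
    (hb'' : ∀ θ ∈ Θ, HasDerivAt b' (b'' θ) θ)
    (hpos : ∀ θ ∈ Θ, 0 < b'' θ)
    (hb''cont : ContinuousOn b'' Θ)
    (h : ℝ → ℝ) (hhc : ContinuousOn h Θ) (hhpos : ∀ θ ∈ Θ, 0 < h θ)
    (bm bp : ℝ) (hbmp : bm ≤ bp) (hB : Set.Icc bm bp ⊆ Θ)
    (γ ζ : ℝ) (hγ : γ ∈ Set.Ioo (0 : ℝ) 1) (hζ : ζ ∈ Set.Ioo (0 : ℝ) 1)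
    (hζγ : (1 + ζ) ^ 2 = (1 - γ / 2) / (1 - γ)) :
    ∃ u₀ > 0, ∀ θ ∈ Set.Icc bm bp, ∀ u : ℝ, 0 < u → u ≤ u₀ →
      (1 - γ) * (2 * h θ / u)
        ≤ (b' θ - b' (θ - u)) * h (θ - u) /
            (b' (θ - u) * ((θ - u) - (θ + ζ * u)) - b (θ - u) + b (θ + ζ * u)) := by
  obtain ⟨hγ0, hγ1⟩ := hγ
  obtain ⟨hζ0, hζ1⟩ := hζ
  -- Enlarge the compact set slightly inside Θ
  obtain ⟨δ, hδpos, hδ⟩ := (isCompact_Icc (a := bm) (b := bp)).exists_thickening_subset_open hΘ hB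
  set B' : Set ℝ := Set.Icc (bm - δ / 2) (bp + δ / 2) with hB'def
  have hB'Θ : B' ⊆ Θ := by
    intro x hx
    apply hδ
    rw [Metric.mem_thickening_iff]
    refine ⟨max bm (min x bp), ⟨le_max_left _ _, max_le hbmp (min_le_right _ _)⟩, ?_⟩
    rw [Real.dist_eq]
    rcases le_total x bm with hx1 | hx1
    · have : min x bp = x := min_eq_left (hx1.trans hbmp)
      rw [this, max_eq_left hx1]
      rw [abs_sub_lt_iff]; constructor <;> [linarith; linarith [hx.1]]
    · rcases le_total x bp with hx2 | hx2
      · rw [min_eq_left hx2, max_eq_right hx1]; simpa using hδpos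
      · rw [min_eq_right hx2, max_eq_right hbmp]
        rw [abs_sub_lt_iff]; constructor <;> [linarith [hx.2]; linarith]
  have hB'ne : B'.Nonempty := Set.nonempty_Icc.2 (by linarith)
  have hB'cpt : IsCompact B' := isCompact_Icc
  -- minimum of b'' on B'
  obtain ⟨xm, hxm, hxmin⟩ := hB'cpt.exists_isMinOn hB'ne (hb''cont.mono hB'Θ)
  set m : ℝ := b'' xm with hmdef
  have hm : 0 < m := hpos xm (hB'Θ hxm)
  -- minimum of h on B'
  obtain ⟨ym, hym, hymin⟩ := hB'cpt.exists_isMinOn hB'ne (hhc.mono hB'Θ)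
  set mh : ℝ := h ym with hmhdef
  have hmh : 0 < mh := hhpos ym (hB'Θ hym)
  -- uniform continuity
  obtain ⟨δ₂, hδ₂pos, hδ₂⟩ := Metric.uniformContinuousOn_iff.1
    (hB'cpt.uniformContinuousOn_of_continuous (hb''cont.mono hB'Θ)) (γ / 8 * m)
    (by positivity)
  obtain ⟨δ₃, hδ₃pos, hδ₃⟩ := Metric.uniformContinuousOn_iff.1
    (hB'cpt.uniformContinuousOn_of_continuous (hhc.mono hB'Θ)) (γ / 8 * mh)
    (by positivity)
  refine ⟨min (δ / 2) (min δ₂ δ₃ / 2), by positivity, ?_⟩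
  intro θ hθ u hu hu₀
  have huδ : u ≤ δ / 2 := hu₀.trans (min_le_left _ _)
  have huδ₂ : 2 * u ≤ δ₂ := by
    have := hu₀.trans (min_le_right _ _)
    have := min_le_left δ₂ δ₃
    linarith
  have huδ₃ : u < δ₃ := by
    have := hu₀.trans (min_le_right _ _)
    have := min_le_right δ₂ δ₃
    linarith
  set lam : ℝ := θ - u with hlamdef
  set mu : ℝ := θ + ζ * u with hmudef
  have hlamθ : lam < θ := by simp [hlamdef]; linarith
  have hθmu : θ < mu := by simp [hmudef]; positivity
  have hlammu : lam < mu := hlamθ.trans hθmu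
  have hIB' : Set.Icc lam mu ⊆ B' := by
    intro x hx
    constructor
    · have : bm ≤ θ := hθ.1
      have : bm - δ / 2 ≤ lam := by simp [hlamdef]; linarith
      linarith [hx.1]
    · have : θ ≤ bp := hθ.2
      have hζu : ζ * u ≤ δ / 2 := by
        have := mul_le_mul_of_nonneg_right hζ1.le hu.le
        rw [one_mul] at this
        linarith
      have : mu ≤ bp + δ / 2 := by simp [hmudef]; linarith
      linarith [hx.2]
  have hIΘ : Set.Icc lam mu ⊆ Θ := fun x hx => hB'Θ (hIB' hx)
  -- continuity facts on the interval
  have hb'cont : ∀ s ⊆ Set.Icc lam mu, ContinuousOn b' s := fun s hs x hx =>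
    (hb'' x (hIΘ (hs hx))).continuousAt.continuousWithinAt
  have hbcont : ∀ s ⊆ Set.Icc lam mu, ContinuousOn b s := fun s hs x hx =>
    (hb' x (hIΘ (hs hx))).continuousAt.continuousWithinAt
  -- MVT for b' on [lam, θ]
  have hsub1 : Set.Icc lam θ ⊆ Set.Icc lam mu := Set.Icc_subset_Icc le_rfl hθmu.le
  obtain ⟨ξ, hξ, hξeq⟩ := exists_hasDerivAt_eq_slope b' b'' hlamθ
    (hb'cont _ hsub1)
    (fun x hx => hb'' x (hIΘ (hsub1 (Set.Ioo_subset_Icc_self hx))))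
  have hξI : ξ ∈ Set.Icc lam mu := hsub1 (Set.Ioo_subset_Icc_self hξ)
  have hD : b' θ - b' lam = b'' ξ * u := by
    have hune : θ - lam = u := by simp [hlamdef]
    rw [hune, eq_div_iff (ne_of_gt hu)] at hξeq
    linarith
  -- Cauchy MVT on [lam, mu] for Taylor remainder
  set K : ℝ := b' lam * (lam - mu) - b lam + b mu with hKdef
  have hf : ∀ x ∈ Set.Ioo lam mu, HasDerivAt
      (fun t => b t - b lam - b' lam * (t - lam)) (b' x - b' lam) x := by
    intro x hx
    have h1 : HasDerivAt (fun t => b' lam * (t - lam)) (b' lam) x := by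
      simpa using (((hasDerivAt_id x).sub_const lam).const_mul (b' lam))
    exact ((hb' x (hIΘ (Set.Ioo_subset_Icc_self hx))).sub_const (b lam)).sub h1
  have hg : ∀ x ∈ Set.Ioo lam mu, HasDerivAt
      (fun t => (t - lam) ^ 2) (2 * (x - lam)) x := by
    intro x hx
    have := ((hasDerivAt_id x).sub_const lam).pow 2
    exact this.congr_deriv (by simp [mul_comm])
  obtain ⟨c, hc, hceq⟩ := exists_ratio_hasDerivAt_eq_ratio_slope
    (fun t => b t - b lam - b' lam * (t - lam)) (fun x => b' x - b' lam) hlammu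
    (((hbcont _ le_rfl).sub continuousOn_const).sub
      (continuousOn_const.mul ((continuousOn_id.sub continuousOn_const)))) hf
    (fun t => (t - lam) ^ 2) (fun x => 2 * (x - lam))
    (((continuousOn_id.sub continuousOn_const)).pow 2) hg
  -- MVT for b' on [lam, c]
  have hsub2 : Set.Icc lam c ⊆ Set.Icc lam mu := Set.Icc_subset_Icc le_rfl hc.2.le
  obtain ⟨c₂, hc₂, hc₂eq⟩ := exists_hasDerivAt_eq_slope b' b'' hc.1
    (hb'cont _ hsub2)
    (fun x hx => hb'' x (hIΘ (hsub2 (Set.Ioo_subset_Icc_self hx))))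
  have hc₂I : c₂ ∈ Set.Icc lam mu := hsub2 (Set.Ioo_subset_Icc_self hc₂)
  have hE : b' c - b' lam = b'' c₂ * (c - lam) := by
    have hclam : c - lam ≠ 0 := sub_ne_zero.mpr (ne_of_gt hc.1)
    rw [eq_div_iff hclam] at hc₂eq
    linarith
  have hKeq : K = b'' c₂ * (mu - lam) ^ 2 / 2 := by
    have hclam : (0:ℝ) < c - lam := by linarith [hc.1]
    have h1 : (mu - lam) ^ 2 * (b' c - b' lam)
        = (b mu - b lam - b' lam * (mu - lam)) * (2 * (c - lam)) := by
      simpa using hceq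
    have h2 : K = b mu - b lam - b' lam * (mu - lam) := by rw [hKdef]; ring
    rw [hE] at h1
    have h3 : (2 * K) * (c - lam) = (b'' c₂ * (mu - lam) ^ 2) * (c - lam) := by
      rw [h2]; linear_combination -h1
    have h4 := mul_right_cancel₀ (sub_ne_zero.mpr (ne_of_gt hc.1)) h3
    linear_combination h4 / 2
  -- bounds
  have hmξ : m ≤ b'' ξ := hxmin (hIB' hξI)
  have hmc₂ : m ≤ b'' c₂ := hxmin (hIB' hc₂I)
  have hθB' : θ ∈ B' := hIB' ⟨hlamθ.le, hθmu.le⟩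
  have hlamB' : lam ∈ B' := hIB' ⟨le_rfl, hlammu.le⟩
  have hmhθ : mh ≤ h θ := hymin hθB'
  have hc₂ξ : |b'' c₂ - b'' ξ| < γ / 8 * m := by
    have hd : dist c₂ ξ < δ₂ := by
      rw [Real.dist_eq, abs_sub_lt_iff]
      have h1 := hc₂I.1; have h2 := hc₂I.2; have h3 := hξI.1; have h4 := hξI.2
      have h5 : mu - lam = (1 + ζ) * u := by simp [hmudef, hlamdef]; ring
      have h6 : ζ * u < u := by
        have := mul_lt_mul_of_pos_right hζ1 hu
        rw [one_mul] at this
        linarith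
      constructor <;> linarith
    have := hδ₂ c₂ (hIB' hc₂I) ξ (hIB' hξI) hd
    rwa [Real.dist_eq] at this
  have hhlam : |h lam - h θ| < γ / 8 * mh := by
    have hd : dist lam θ < δ₃ := by
      rw [Real.dist_eq, abs_sub_lt_iff]
      constructor <;> simp [hlamdef] <;> linarith
    have := hδ₃ lam hlamB' θ hθB' hd
    rwa [Real.dist_eq] at this
  -- final computation
  have hmulam : mu - lam = (1 + ζ) * u := by simp [hmudef, hlamdef]; ring
  have hEpos : 0 < b'' c₂ := lt_of_lt_of_le hm hmc₂
  have hKpos : 0 < K := by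
    rw [hKeq, hmulam]; positivity
  have h1γ : (1 : ℝ) - γ ≠ 0 := by linarith
  have hζγ' : (1 - γ) * (1 + ζ) ^ 2 = 1 - γ / 2 := by
    rw [hζγ, mul_comm, div_mul_cancel₀ _ h1γ]
  rw [hD, hKeq, hmulam, ← mul_div_assoc]
  rw [div_le_div_iff₀ hu (div_pos (mul_pos hEpos (by positivity)) two_pos)]
  have hc₂ξ' : b'' c₂ ≤ b'' ξ + γ / 8 * m := by
    have := abs_sub_lt_iff.1 hc₂ξ
    linarith [this.1]
  have hhlam' : h θ - γ / 8 * mh ≤ h lam := by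
    have := abs_sub_lt_iff.1 hhlam
    linarith [this.2]
  have hθpos : 0 < h θ := hhpos θ (hB'Θ hθB')
  have hA : 0 < b'' ξ := lt_of_lt_of_le hm hmξ
  have s1 : (1 - γ / 2) * (h θ * b'' c₂) ≤ (1 - γ / 2) * (h θ * (b'' ξ + γ / 8 * m)) :=
    mul_le_mul_of_nonneg_left (mul_le_mul_of_nonneg_left hc₂ξ' hθpos.le) (by linarith)
  have s2 : (1 - γ / 2) * (h θ * (b'' ξ + γ / 8 * m)) ≤ (1 - γ / 8) * (h θ * b'' ξ) := by
    have inner : (1 - γ / 2) * (b'' ξ + γ / 8 * m) ≤ (1 - γ / 8) * b'' ξ := by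
      have p1 : γ * m ≤ γ * b'' ξ := mul_le_mul_of_nonneg_left hmξ hγ0.le
      have p2 : (0 : ℝ) ≤ γ * (γ * m) := by positivity
      have p3 : (0 : ℝ) ≤ γ * m := by positivity
      linarith [p1, p2, p3]
    calc (1 - γ / 2) * (h θ * (b'' ξ + γ / 8 * m))
        = h θ * ((1 - γ / 2) * (b'' ξ + γ / 8 * m)) := by ring
      _ ≤ h θ * ((1 - γ / 8) * b'' ξ) := mul_le_mul_of_nonneg_left inner hθpos.le
      _ = (1 - γ / 8) * (h θ * b'' ξ) := by ring
  have s3 : (1 - γ / 8) * (h θ * b'' ξ) ≤ b'' ξ * h lam := by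
    have h7 : (1 - γ / 8) * h θ ≤ h lam := by
      have p : γ * mh ≤ γ * h θ := mul_le_mul_of_nonneg_left hmhθ hγ0.le
      linarith [p]
    calc (1 - γ / 8) * (h θ * b'' ξ) = b'' ξ * ((1 - γ / 8) * h θ) := by ring
      _ ≤ b'' ξ * h lam := mul_le_mul_of_nonneg_left h7 hA.le
  have key : (1 - γ / 2) * (h θ * b'' c₂) ≤ b'' ξ * h lam := le_trans (le_trans s1 s2) s3
  have hql : (1 - γ) * (2 * h θ) * (b'' c₂ * ((1 + ζ) * u) ^ 2 / 2)
      = ((1 - γ / 2) * (h θ * b'' c₂)) * u ^ 2 := by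
    rw [← hζγ']; ring
  have hqr : b'' ξ * u * h lam * u = (b'' ξ * h lam) * u ^ 2 := by ring
  rw [hql, hqr]
  exact mul_le_mul_of_nonneg_right key (sq_nonneg u)
end
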